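/- Let u_r ∈ U_r satisfy the sketched Galerkin condition ‖r(u_r)‖_{U_r'}^Θ = 0, where r(x) = b − A x, and define α_r^Θ = min_{x ∈ U_r\{0}} ‖A x‖_{U_r'}^Θ / ‖x‖_U and β_r^Θ = max_{x ∈ (span{u}+U_r)\{0}} ‖A x‖_{U_r'}^Θ / ‖x‖_U with u the exact solution of A u = b. If α_r^Θ > 0, then ‖u − u_r‖_U ≤ (1 + β_r^Θ/α_r^Θ) ‖u − P_{U_r} u‖_U. -/

import Mathlib

open Matrix BigOperators

noncomputable section

/-- Inner product induced by `R`: `⟨x,y⟩_U = ⟨R x, y⟩`. -/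
def ipR {n : ℕ} (R : Matrix (Fin n) (Fin n) ℝ) (x y : Fin n → ℝ) : ℝ :=
  R.mulVec x ⬝ᵥ y

/-- Norm induced by `R`. -/
def normR {n : ℕ} (R : Matrix (Fin n) (Fin n) ℝ) (x : Fin n → ℝ) : ℝ :=
  Real.sqrt (ipR R x x)

/-- Euclidean norm. -/
def norm2 {m : ℕ} (v : Fin m → ℝ) : ℝ :=
  Real.sqrt (v ⬝ᵥ v)

/-- Dual norm `‖y‖_{U'}` induced by `⟨·, R⁻¹ ·⟩`. -/
def normDual {n : ℕ} (R : Matrix (Fin n) (Fin n) ℝ) (y : Fin n → ℝ) : ℝ :=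
  Real.sqrt (y ⬝ᵥ R⁻¹.mulVec y)

/-- Dual seminorm `‖y‖_{Z'} = sup_{w ∈ Z, w ≠ 0} |⟨y,w⟩|/‖w‖_U`. -/
def dualSemi {n : ℕ} (R : Matrix (Fin n) (Fin n) ℝ) (Z : Submodule ℝ (Fin n → ℝ))
    (y : Fin n → ℝ) : ℝ :=
  ⨆ w : Z, |y ⬝ᵥ (w : Fin n → ℝ)| / normR R (w : Fin n → ℝ)

/-- Sketched dual seminorm `‖y‖_{Z'}^Θ = sup_{w ∈ Z, w ≠ 0} |⟨Θ R⁻¹ y, Θ w⟩|/‖Θ w‖`. -/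
def skDualSemi {n k : ℕ} (R : Matrix (Fin n) (Fin n) ℝ) (Θ : Matrix (Fin k) (Fin n) ℝ)
    (Z : Submodule ℝ (Fin n → ℝ)) (y : Fin n → ℝ) : ℝ :=
  ⨆ w : Z, |(Θ.mulVec (R⁻¹.mulVec y)) ⬝ᵥ (Θ.mulVec (w : Fin n → ℝ))| /
      norm2 (Θ.mulVec (w : Fin n → ℝ))

/-- `i`-th column of a matrix as a vector. -/
def colV {n m : ℕ} (M : Matrix (Fin n) (Fin m) ℝ) (i : Fin m) : Fin n → ℝ :=
  fun j => M j i

/-- Squared Frobenius norm. -/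
def frob2 {a b : ℕ} (M : Matrix (Fin a) (Fin b) ℝ) : ℝ :=
  ∑ i, ∑ j, (M i j) ^ 2

lemma cs_dot {m : ℕ} (a v : Fin m → ℝ) : |a ⬝ᵥ v| ≤ norm2 a * norm2 v := by
  have h : (a ⬝ᵥ v) ^ 2 ≤ (a ⬝ᵥ a) * (v ⬝ᵥ v) := by
    simpa [dotProduct, sq] using Finset.sum_mul_sq_le_sq_mul_sq Finset.univ a v
  calc |a ⬝ᵥ v| = Real.sqrt ((a ⬝ᵥ v) ^ 2) := (Real.sqrt_sq_eq_abs _).symm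
    _ ≤ Real.sqrt ((a ⬝ᵥ a) * (v ⬝ᵥ v)) := Real.sqrt_le_sqrt h
    _ = norm2 a * norm2 v := Real.sqrt_mul (by simpa [dotProduct, sq] using Finset.sum_nonneg fun i _ => mul_self_nonneg (a i)) _

lemma norm2_nonneg {m : ℕ} (v : Fin m → ℝ) : 0 ≤ norm2 v := Real.sqrt_nonneg _

lemma term_le {m : ℕ} (a v : Fin m → ℝ) : |a ⬝ᵥ v| / norm2 v ≤ norm2 a := by
  rcases eq_or_lt_of_le (norm2_nonneg v) with h | h
  · rw [← h, div_zero]; exact norm2_nonneg a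
  · rw [div_le_iff₀ h]; exact cs_dot a v

lemma skBdd {n k : ℕ} (R : Matrix (Fin n) (Fin n) ℝ) (Θ : Matrix (Fin k) (Fin n) ℝ)
    (Z : Submodule ℝ (Fin n → ℝ)) (y : Fin n → ℝ) :
    BddAbove (Set.range fun w : Z =>
      |(Θ.mulVec (R⁻¹.mulVec y)) ⬝ᵥ (Θ.mulVec (w : Fin n → ℝ))| /
        norm2 (Θ.mulVec (w : Fin n → ℝ))) := by
  refine ⟨norm2 (Θ.mulVec (R⁻¹.mulVec y)), ?_⟩
  rintro x ⟨w, rfl⟩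
  exact term_le _ _


lemma skDualSemi_add_le {n k : ℕ} (R : Matrix (Fin n) (Fin n) ℝ)
    (Θ : Matrix (Fin k) (Fin n) ℝ) (Z : Submodule ℝ (Fin n → ℝ)) (y₁ y₂ : Fin n → ℝ) :
    skDualSemi R Θ Z (y₁ + y₂) ≤ skDualSemi R Θ Z y₁ + skDualSemi R Θ Z y₂ := by
  refine ciSup_le fun w => ?_
  have hlin : Θ.mulVec (R⁻¹.mulVec (y₁ + y₂)) ⬝ᵥ Θ.mulVec (w : Fin n → ℝ)
      = Θ.mulVec (R⁻¹.mulVec y₁) ⬝ᵥ Θ.mulVec (w : Fin n → ℝ)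
        + Θ.mulVec (R⁻¹.mulVec y₂) ⬝ᵥ Θ.mulVec (w : Fin n → ℝ) := by
    rw [mulVec_add, mulVec_add, add_dotProduct]
  calc |Θ.mulVec (R⁻¹.mulVec (y₁ + y₂)) ⬝ᵥ Θ.mulVec (w : Fin n → ℝ)| /
        norm2 (Θ.mulVec (w : Fin n → ℝ))
      ≤ |Θ.mulVec (R⁻¹.mulVec y₁) ⬝ᵥ Θ.mulVec (w : Fin n → ℝ)| /
          norm2 (Θ.mulVec (w : Fin n → ℝ))
        + |Θ.mulVec (R⁻¹.mulVec y₂) ⬝ᵥ Θ.mulVec (w : Fin n → ℝ)| /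
          norm2 (Θ.mulVec (w : Fin n → ℝ)) := by
        rw [hlin, ← add_div]
        exact div_le_div_of_nonneg_right (abs_add_le _ _) (norm2_nonneg _)
    _ ≤ _ := add_le_add (le_ciSup (skBdd R Θ Z y₁) w) (le_ciSup (skBdd R Θ Z y₂) w)


section ip
variable {n : ℕ} {R : Matrix (Fin n) (Fin n) ℝ}

lemma ipR_symm (hR : R.PosDef) (x y : Fin n → ℝ) : ipR R x y = ipR R y x := by
  have hT : Rᵀ = R := by
    have h := hR.isHermitian
    exact (Matrix.conjTranspose_eq_transpose_of_trivial R).symm.trans h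
  unfold ipR
  rw [dotProduct_comm, Matrix.dotProduct_mulVec, ← Matrix.mulVec_transpose, hT]

lemma ipR_self_nonneg (hR : R.PosDef) (z : Fin n → ℝ) : 0 ≤ ipR R z z := by
  have := hR.posSemidef.dotProduct_mulVec_nonneg z
  simpa [ipR, dotProduct_comm] using this

lemma ipR_cs (hR : R.PosDef) (x y : Fin n → ℝ) : |ipR R x y| ≤ normR R x * normR R y := by
  have key : (ipR R x y) ^ 2 ≤ ipR R x x * ipR R y y := by
    have hq : ∀ t : ℝ, 0 ≤ ipR R y y * (t * t) + (2 * ipR R x y) * t + ipR R x x := by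
      intro t
      have h0 : 0 ≤ ipR R (x + t • y) (x + t • y) := ipR_self_nonneg hR _
      have hexp : ipR R (x + t • y) (x + t • y)
          = ipR R y y * (t * t) + (2 * ipR R x y) * t + ipR R x x := by
        unfold ipR
        rw [mulVec_add, add_dotProduct, dotProduct_add, dotProduct_add]
        have hsymm : R.mulVec y ⬝ᵥ x = R.mulVec x ⬝ᵥ y := ipR_symm hR _ _
        simp only [mulVec_smul, smul_dotProduct, dotProduct_smul, smul_eq_mul, hsymm]
        ring
      linarith [hexp ▸ h0]
    have := discrim_le_zero hq
    unfold discrim at this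
    nlinarith
  have h1 : |ipR R x y| = Real.sqrt ((ipR R x y) ^ 2) := (Real.sqrt_sq_eq_abs _).symm
  rw [h1]
  calc Real.sqrt ((ipR R x y) ^ 2) ≤ Real.sqrt (ipR R x x * ipR R y y) :=
        Real.sqrt_le_sqrt key
    _ = normR R x * normR R y := Real.sqrt_mul (ipR_self_nonneg hR _) _

lemma normR_nonneg (x : Fin n → ℝ) : 0 ≤ normR R x := Real.sqrt_nonneg _

lemma normR_triangle (hR : R.PosDef) (x y : Fin n → ℝ) :
    normR R (x + y) ≤ normR R x + normR R y := by
  have hexp : ipR R (x + y) (x + y) = ipR R x x + 2 * ipR R x y + ipR R y y := by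
    unfold ipR
    rw [mulVec_add, add_dotProduct, dotProduct_add, dotProduct_add]
    have hsymm : R.mulVec y ⬝ᵥ x = R.mulVec x ⬝ᵥ y := ipR_symm hR _ _
    rw [hsymm]; ring
  have hx : ipR R x x = (normR R x) ^ 2 := (Real.sq_sqrt (ipR_self_nonneg hR x)).symm
  have hy : ipR R y y = (normR R y) ^ 2 := (Real.sq_sqrt (ipR_self_nonneg hR y)).symm
  have hcs := ipR_cs hR x y
  have hle : ipR R (x + y) (x + y) ≤ (normR R x + normR R y) ^ 2 := by
    rw [hexp, hx, hy]
    have : ipR R x y ≤ |ipR R x y| := le_abs_self _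
    nlinarith
  calc normR R (x + y) = Real.sqrt (ipR R (x + y) (x + y)) := rfl
    _ ≤ Real.sqrt ((normR R x + normR R y) ^ 2) := Real.sqrt_le_sqrt hle
    _ = |normR R x + normR R y| := Real.sqrt_sq_eq_abs _
    _ = normR R x + normR R y := abs_of_nonneg (add_nonneg (Real.sqrt_nonneg _) (Real.sqrt_nonneg _))

lemma normR_neg (x : Fin n → ℝ) : normR R (-x) = normR R x := by
  unfold normR ipR
  rw [mulVec_neg, neg_dotProduct, dotProduct_neg, neg_neg]

end ip

/-- Cea's lemma for the sketched Galerkin projection. -/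
theorem sketched_cea_lemma {n k : ℕ} (R A : Matrix (Fin n) (Fin n) ℝ) (hR : R.PosDef)
    (Θ : Matrix (Fin k) (Fin n) ℝ)
    (b u ur p : Fin n → ℝ) (Ur : Submodule ℝ (Fin n → ℝ)) (α β : ℝ)
    (hu : A.mulVec u = b) (hur : ur ∈ Ur)
    (hGal : skDualSemi R Θ Ur (b - A.mulVec ur) = 0)
    (hα : 0 < α)
    (hαb : ∀ x ∈ Ur, α * normR R x ≤ skDualSemi R Θ Ur (A.mulVec x))
    (hβ : ∀ x ∈ Submodule.span ℝ {u} ⊔ Ur,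
      skDualSemi R Θ Ur (A.mulVec x) ≤ β * normR R x)
    (hp : p ∈ Ur) (hporth : ∀ w ∈ Ur, ipR R (u - p) w = 0) :
    normR R (u - ur) ≤ (1 + β / α) * normR R (u - p) := by
  have hq : p - ur ∈ Ur := Submodule.sub_mem _ hp hur
  have hA : A.mulVec (p - ur) = A.mulVec (p - u) + (b - A.mulVec ur) := by
    rw [← hu, mulVec_sub, mulVec_sub]
    abel
  have hmem : p - u ∈ Submodule.span ℝ {u} ⊔ Ur :=
    Submodule.sub_mem _ (Submodule.mem_sup_right hp)
      (Submodule.mem_sup_left (Submodule.mem_span_singleton_self u))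
  have hchain : α * normR R (p - ur) ≤ β * normR R (u - p) := by
    calc α * normR R (p - ur) ≤ skDualSemi R Θ Ur (A.mulVec (p - ur)) := hαb _ hq
      _ = skDualSemi R Θ Ur (A.mulVec (p - u) + (b - A.mulVec ur)) := by rw [hA]
      _ ≤ skDualSemi R Θ Ur (A.mulVec (p - u)) + skDualSemi R Θ Ur (b - A.mulVec ur) :=
          skDualSemi_add_le R Θ Ur _ _
      _ = skDualSemi R Θ Ur (A.mulVec (p - u)) := by rw [hGal, add_zero]
      _ ≤ β * normR R (p - u) := hβ _ hmem
      _ = β * normR R (u - p) := by rw [show p - u = -(u - p) by abel, normR_neg]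
  have h1 : normR R (p - ur) ≤ β / α * normR R (u - p) := by
    rw [div_mul_eq_mul_div, le_div_iff₀ hα]
    linarith
  calc normR R (u - ur) = normR R ((u - p) + (p - ur)) := by
        congr 1; abel
    _ ≤ normR R (u - p) + normR R (p - ur) := normR_triangle hR _ _
    _ ≤ normR R (u - p) + β / α * normR R (u - p) := by linarith
    _ = (1 + β / α) * normR R (u - p) := by ring
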